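/- Suppose Λ(x₁) is positive definite and set e := −g(x₁). Let r ∈ (0, 1/2], let t ∈ ℝ^U, and let c > 0 satisfy c ≥ ((1 + r)/r)·‖t‖*_{x₁}. Then: (i) Λ(H(c⁻¹·x₁)⁻¹·(t + c·e)) is positive semidefinite (i.e., c⁻¹·x₁, and hence x₁, is a dual certificate of t + c·e); and (ii) if y_c ∈ ℝ^U satisfies Λ(y_c) positive definite and −g(y_c) = t + c·e, then ‖c⁻¹·x₁ − y_c‖_{c⁻¹·x₁} ≤ r. -/

import Mathlib

open Matrix

/-- The gradient of the barrier `f(x) = -log det Λ(x)`: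
`g(x)_i = -tr(Λ(x)⁻¹ · Λ(e_i))` (with the total matrix inverse, `0` for singular matrices). -/
noncomputable def grad {U L : ℕ} (Lam : (Fin U → ℝ) →ₗ[ℝ] Matrix (Fin L) (Fin L) ℝ)
    (x : Fin U → ℝ) : Fin U → ℝ :=
  fun i => -((Lam x)⁻¹ * Lam (Pi.single i 1)).trace

/-- The Hessian of the barrier: `H(x)_{ij} = tr(Λ(x)⁻¹ Λ(e_i) Λ(x)⁻¹ Λ(e_j))`. -/
noncomputable def hess {U L : ℕ} (Lam : (Fin U → ℝ) →ₗ[ℝ] Matrix (Fin L) (Fin L) ℝ)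
    (x : Fin U → ℝ) : Matrix (Fin U) (Fin U) ℝ :=
  Matrix.of fun i j =>
    ((Lam x)⁻¹ * Lam (Pi.single i 1) * (Lam x)⁻¹ * Lam (Pi.single j 1)).trace

/-- The local norm `‖v‖_x = (vᵀ H(x) v)^{1/2}`. -/
noncomputable def locNorm {U L : ℕ} (Lam : (Fin U → ℝ) →ₗ[ℝ] Matrix (Fin L) (Fin L) ℝ)
    (x v : Fin U → ℝ) : ℝ :=
  Real.sqrt (v ⬝ᵥ (hess Lam x).mulVec v)

/-- The dual local norm `‖t‖*_x = (tᵀ H(x)⁻¹ t)^{1/2}`. -/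
noncomputable def dualNorm {U L : ℕ} (Lam : (Fin U → ℝ) →ₗ[ℝ] Matrix (Fin L) (Fin L) ℝ)
    (x t : Fin U → ℝ) : ℝ :=
  Real.sqrt (t ⬝ᵥ (hess Lam x)⁻¹.mulVec t)


section Aux
set_option linter.unusedSectionVars false
set_option linter.unusedVariables false
namespace Stmt11Aux

variable {n : Type*} [Fintype n] [DecidableEq n]

lemma herm_symm {M : Matrix n n ℝ} (h : M.IsHermitian) : Mᵀ = M := by
  ext i j
  have := congrFun (congrFun h.eq i) j
  simpa [Matrix.conjTranspose_apply] using this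

lemma trace_mul_self_eq {N : Matrix n n ℝ} (h : Nᵀ = N) :
    (N * N).trace = ∑ i, ∑ j, (N i j)^2 := by
  simp only [Matrix.trace, Matrix.diag, Matrix.mul_apply]
  refine Finset.sum_congr rfl fun i _ => Finset.sum_congr rfl fun j _ => ?_
  have hji : N j i = N i j := congrFun (congrFun h.symm i) j ▸ rfl
  rw [hji, sq]

lemma trace_mul_self_nonneg {N : Matrix n n ℝ} (h : Nᵀ = N) : 0 ≤ (N * N).trace := by
  rw [trace_mul_self_eq h]; positivity

lemma dot_self_nonneg (z : n → ℝ) : 0 ≤ z ⬝ᵥ z :=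
  Finset.sum_nonneg fun i _ => mul_self_nonneg _

lemma abs_quad_le {N : Matrix n n ℝ} (h : Nᵀ = N) (z : n → ℝ) :
    |z ⬝ᵥ N *ᵥ z| ≤ Real.sqrt ((N * N).trace) * (z ⬝ᵥ z) := by
  have hrewrite : z ⬝ᵥ N *ᵥ z = ∑ p : n × n, (z p.1 * z p.2) * N p.1 p.2 := by
    rw [Fintype.sum_prod_type]
    simp only [dotProduct, Matrix.mulVec, dotProduct, Finset.mul_sum]
    exact Finset.sum_congr rfl fun i _ => Finset.sum_congr rfl fun j _ => by ring
  have hcs := Finset.sum_mul_sq_le_sq_mul_sq Finset.univ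
    (fun p : n × n => z p.1 * z p.2) (fun p : n × n => N p.1 p.2)
  have hf : (∑ p : n × n, (z p.1 * z p.2)^2) = (z ⬝ᵥ z)^2 := by
    rw [Fintype.sum_prod_type]
    simp only [dotProduct, sq, Finset.sum_mul_sum]
    exact Finset.sum_congr rfl fun i _ => Finset.sum_congr rfl fun j _ => by ring
  have hg : (∑ p : n × n, (N p.1 p.2)^2) = (N * N).trace := by
    rw [trace_mul_self_eq h, Fintype.sum_prod_type]
  rw [hf, hg] at hcs
  have h1 : |z ⬝ᵥ N *ᵥ z| = Real.sqrt ((z ⬝ᵥ N *ᵥ z)^2) := (Real.sqrt_sq_eq_abs _).symm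
  rw [h1, hrewrite]
  calc Real.sqrt ((∑ p : n × n, (z p.1 * z p.2) * N p.1 p.2)^2)
      ≤ Real.sqrt ((z ⬝ᵥ z)^2 * (N * N).trace) := Real.sqrt_le_sqrt hcs
    _ = Real.sqrt ((N * N).trace) * (z ⬝ᵥ z) := by
        rw [Real.sqrt_mul (sq_nonneg _), Real.sqrt_sq (dot_self_nonneg z), mul_comm]

lemma one_add_posSemidef {N : Matrix n n ℝ} (h : Nᵀ = N) (h1 : (N * N).trace ≤ 1) :
    (1 + N).PosSemidef := by
  have hNh : N.IsHermitian := by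
    ext i j
    simp only [Matrix.conjTranspose_apply, star_trivial]
    exact congrFun (congrFun h j) i ▸ rfl
  refine Matrix.PosSemidef.of_dotProduct_mulVec_nonneg (Matrix.isHermitian_one.add hNh) fun z => ?_
  have hz : star z = z := by simp
  rw [hz, Matrix.add_mulVec, Matrix.one_mulVec, dotProduct_add]
  have habs := abs_quad_le h z
  have hs : Real.sqrt ((N * N).trace) ≤ 1 := by
    rw [show (1:ℝ) = Real.sqrt 1 by simp]
    exact Real.sqrt_le_sqrt h1
  have hzz := dot_self_nonneg z
  have := abs_le.mp habs
  nlinarith [this.1, this.2]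

lemma dot_mulVec_comm {H : Matrix n n ℝ} (h : Hᵀ = H) (v w : n → ℝ) :
    v ⬝ᵥ H *ᵥ w = w ⬝ᵥ H *ᵥ v := by
  rw [Matrix.dotProduct_mulVec, ← Matrix.mulVec_transpose, h, dotProduct_comm]

lemma psd_cauchy {H : Matrix n n ℝ} (hH : H.PosSemidef) (v w : n → ℝ) :
    (v ⬝ᵥ H *ᵥ w)^2 ≤ (v ⬝ᵥ H *ᵥ v) * (w ⬝ᵥ H *ᵥ w) := by
  have hsymm := herm_symm hH.1
  have key : ∀ lam : ℝ, 0 ≤ (w ⬝ᵥ H *ᵥ w) * (lam * lam) + (2 * (v ⬝ᵥ H *ᵥ w)) * lam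
      + (v ⬝ᵥ H *ᵥ v) := by
    intro lam
    have h0 := hH.dotProduct_mulVec_nonneg (v + lam • w)
    rw [star_trivial] at h0
    have hexp : (v + lam • w) ⬝ᵥ H *ᵥ (v + lam • w)
        = (v ⬝ᵥ H *ᵥ v) + lam * (v ⬝ᵥ H *ᵥ w) + lam * (w ⬝ᵥ H *ᵥ v)
          + (lam * lam) * (w ⬝ᵥ H *ᵥ w) := by
      rw [Matrix.mulVec_add, Matrix.mulVec_smul]
      simp only [dotProduct_add, add_dotProduct, smul_dotProduct,
        dotProduct_smul, smul_eq_mul]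
      ring
    rw [hexp, dot_mulVec_comm hsymm w v] at h0
    linarith
  have hd := discrim_le_zero key
  rw [discrim] at hd
  nlinarith [hd]

lemma inv_quad_lower {M : Matrix n n ℝ} (hM : M.PosDef) {k : ℝ} (hk : 0 < k)
    (hub : ∀ z, z ⬝ᵥ M *ᵥ z ≤ k * (z ⬝ᵥ z)) (z : n → ℝ) :
    (z ⬝ᵥ z) / k ≤ z ⬝ᵥ M⁻¹ *ᵥ z := by
  have hdet' : IsUnit M.det := (Matrix.isUnit_iff_isUnit_det M).mp hM.isUnit
  have hMMinv : M * M⁻¹ = 1 := Matrix.mul_nonsing_inv M hdet'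
  have hcs := psd_cauchy hM.posSemidef z (M⁻¹ *ᵥ z)
  have h1 : z ⬝ᵥ M *ᵥ (M⁻¹ *ᵥ z) = z ⬝ᵥ z := by
    rw [Matrix.mulVec_mulVec, hMMinv, Matrix.one_mulVec]
  have h2 : (M⁻¹ *ᵥ z) ⬝ᵥ M *ᵥ (M⁻¹ *ᵥ z) = z ⬝ᵥ M⁻¹ *ᵥ z := by
    rw [Matrix.mulVec_mulVec, hMMinv, Matrix.one_mulVec, dotProduct_comm]
  rw [h1, h2] at hcs
  have hub' := hub z
  have hp : 0 ≤ z ⬝ᵥ M⁻¹ *ᵥ z := by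
    have := hM.inv.posSemidef.dotProduct_mulVec_nonneg z; rwa [star_trivial] at this
  have hzz := dot_self_nonneg z
  rw [div_le_iff₀ hk]
  rcases hzz.eq_or_lt with h0 | h0
  · rw [← h0]
    exact mul_nonneg hp hk.le
  · nlinarith [mul_le_mul_of_nonneg_right hub' hp]

lemma trace_conj_lower {S C : Matrix n n ℝ} (hS : Sᵀ = S) {k : ℝ}
    (hlb : ∀ z, (z ⬝ᵥ z) / k ≤ z ⬝ᵥ C *ᵥ z) :
    ((S * S).trace) / k ≤ (S * C * S).trace := by
  have h1 : (S * C * S).trace = ∑ i, (fun j => S i j) ⬝ᵥ C *ᵥ (fun j => S i j) := by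
    simp only [Matrix.trace, Matrix.diag, Matrix.mul_apply, dotProduct, Matrix.mulVec, dotProduct,
      Finset.mul_sum, Finset.sum_mul]
    refine Finset.sum_congr rfl fun i _ => ?_
    rw [Finset.sum_comm]
    refine Finset.sum_congr rfl fun j _ => Finset.sum_congr rfl fun l _ => ?_
    have : S l i = S i l := congrFun (congrFun hS.symm i) l ▸ rfl
    rw [this]; ring
  have h2 : (S * S).trace = ∑ i, (fun j => S i j) ⬝ᵥ (fun j => S i j) := by
    simp only [Matrix.trace, Matrix.diag, Matrix.mul_apply, dotProduct]
    refine Finset.sum_congr rfl fun i _ => Finset.sum_congr rfl fun j _ => ?_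
    have : S j i = S i j := congrFun (congrFun hS.symm i) j ▸ rfl
    rw [this]
  rw [h1, h2, Finset.sum_div]
  exact Finset.sum_le_sum fun i _ => hlb _

end Stmt11Aux
namespace Stmt11Aux

variable {U L : ℕ} (Lam : (Fin U → ℝ) →ₗ[ℝ] Matrix (Fin L) (Fin L) ℝ)

lemma lam_expand (v : Fin U → ℝ) : Lam v = ∑ i, v i • Lam (Pi.single i 1) := by
  have h : ∀ i : Fin U, (fun j => if i = j then (1:ℝ) else 0) = Pi.single i 1 := by
    intro i; funext j; simp [Pi.single_apply, eq_comm]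
  rw [LinearMap.pi_apply_eq_sum_univ]
  simp only [h]

lemma dot_neg_grad (x v : Fin U → ℝ) :
    v ⬝ᵥ (-grad Lam x) = ((Lam x)⁻¹ * Lam v).trace := by
  conv_rhs => rw [lam_expand Lam v]
  rw [Matrix.mul_sum, trace_sum]
  simp only [dotProduct, grad, Pi.neg_apply, neg_neg, Matrix.mul_smul, trace_smul, smul_eq_mul]

lemma hess_bilin (x v w : Fin U → ℝ) :
    v ⬝ᵥ (hess Lam x) *ᵥ w
      = ((Lam x)⁻¹ * Lam v * (Lam x)⁻¹ * Lam w).trace := by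
  conv_rhs => rw [lam_expand Lam v, lam_expand Lam w]
  simp only [Matrix.mul_sum, Matrix.sum_mul, Matrix.mul_smul, Matrix.smul_mul, trace_sum,
    trace_smul, smul_eq_mul, Finset.mul_sum, smul_smul]
  simp only [dotProduct, Matrix.mulVec, dotProduct, hess, Matrix.of_apply, Finset.mul_sum]
  rw [Finset.sum_comm]
  refine Finset.sum_congr rfl fun i _ => Finset.sum_congr rfl fun j _ => by ring

lemma hess_symm (x : Fin U → ℝ) : (hess Lam x)ᵀ = hess Lam x := by
  ext i j
  show hess Lam x j i = hess Lam x i j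
  simp only [hess, Matrix.of_apply]
  rw [mul_assoc ((Lam x)⁻¹ * Lam (Pi.single j 1)), trace_mul_comm,
    mul_assoc ((Lam x)⁻¹ * Lam (Pi.single i 1))]

lemma hess_hermitian (x : Fin U → ℝ) : (hess Lam x).IsHermitian := by
  ext i j
  simp only [Matrix.conjTranspose_apply, star_trivial]
  exact congrFun (congrFun (hess_symm Lam x) j) i ▸ rfl

end Stmt11Aux

namespace Stmt11Aux

lemma symm_to_herm {m : Type*} [Fintype m] {M : Matrix m m ℝ} (h : Mᵀ = M) : M.IsHermitian := by
  ext i j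
  simp only [Matrix.conjTranspose_apply, star_trivial]
  exact (congrFun (congrFun h j) i).symm

lemma conj_transpose_symm {m : Type*} [Fintype m] {B R : Matrix m m ℝ}
    (hB : Bᵀ = B) (hR : Rᵀ = R) : (R * B * R)ᵀ = R * B * R := by
  rw [Matrix.transpose_mul, Matrix.transpose_mul, hB, hR, mul_assoc]

open scoped MatrixOrder in
lemma exists_sqrt {m : Type*} [Fintype m] [DecidableEq m] {A : Matrix m m ℝ} (hA : A.PosDef) :
    ∃ Q R : Matrix m m ℝ, Qᵀ = Q ∧ Rᵀ = R ∧ Q * Q = A ∧ R * R = A⁻¹ ∧ Q * R = 1 ∧ R * Q = 1 := by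
  have hQQ : CFC.sqrt A * CFC.sqrt A = A := CFC.sqrt_mul_sqrt_self A hA.posSemidef.nonneg
  set Q := CFC.sqrt A with hQ
  have hQT : Qᵀ = Q := herm_symm (CFC.sqrt_nonneg A).posSemidef.1
  have hdetA : A.det ≠ 0 := hA.det_pos.ne'
  have hQdet : IsUnit Q.det := by
    have hd : Q.det * Q.det = A.det := by rw [← Matrix.det_mul, hQQ]
    exact isUnit_iff_ne_zero.mpr fun h => hdetA (by rw [← hd, h, zero_mul])
  refine ⟨Q, Q⁻¹, hQT, ?_, hQQ, ?_, Matrix.mul_nonsing_inv Q hQdet, Matrix.nonsing_inv_mul Q hQdet⟩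
  · rw [Matrix.transpose_nonsing_inv, hQT]
  · rw [← hQQ, Matrix.mul_inv_rev]

lemma conj_posDef {m : Type*} [Fintype m] [DecidableEq m] {B R Q : Matrix m m ℝ}
    (hB : B.PosDef) (hRT : Rᵀ = R) (hRQ : R * Q = 1) : (R * B * R).PosDef := by
  have hRunit : IsUnit R := by
    have hd : R.det * Q.det = 1 := by rw [← Matrix.det_mul, hRQ, Matrix.det_one]
    exact (Matrix.isUnit_iff_isUnit_det R).mpr (IsUnit.of_mul_eq_one _ hd)
  refine Matrix.PosDef.of_dotProduct_mulVec_pos (symm_to_herm (conj_transpose_symm (herm_symm hB.1) hRT)) fun z hz => ?_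
  rw [star_trivial]
  have h1 : (R * B * R) *ᵥ z = R *ᵥ (B *ᵥ (R *ᵥ z)) := by rw [← Matrix.mulVec_mulVec,
    ← Matrix.mulVec_mulVec]
  have hne : R *ᵥ z ≠ 0 := by
    intro h
    exact hz ((Matrix.mulVec_injective_iff_isUnit.mpr hRunit)
      (by rw [h, Matrix.mulVec_zero]))
  rw [h1, dot_mulVec_comm hRT, dotProduct_comm]
  have := hB.dotProduct_mulVec_pos hne
  rwa [star_trivial] at this

variable {U L : ℕ} (Lam : (Fin U → ℝ) →ₗ[ℝ] Matrix (Fin L) (Fin L) ℝ)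

lemma quad_eq_trace (x : Fin U → ℝ) {Rm : Matrix (Fin L) (Fin L) ℝ}
    (hRR : Rm * Rm = (Lam x)⁻¹) (v : Fin U → ℝ) :
    v ⬝ᵥ (hess Lam x) *ᵥ v = ((Rm * Lam v * Rm) * (Rm * Lam v * Rm)).trace := by
  rw [hess_bilin, ← hRR]
  have h1 : Rm * Rm * Lam v * (Rm * Rm) * Lam v
      = Rm * (Rm * Lam v * Rm * (Rm * Lam v)) := by simp only [mul_assoc]
  rw [h1, trace_mul_comm]
  congr 1
  simp only [mul_assoc]

lemma hess_posDef (hinj : Function.Injective Lam) (hsym : ∀ v, (Lam v).IsSymm)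
    (x : Fin U → ℝ) (hx : (Lam x).PosDef) : (hess Lam x).PosDef := by
  refine Matrix.PosDef.of_dotProduct_mulVec_pos (hess_hermitian Lam x) fun v hv => ?_
  obtain ⟨Q, R, hQT, hRT, hQQ, hRR, hQR, hRQ⟩ := exists_sqrt hx
  rw [star_trivial, quad_eq_trace Lam x hRR v]
  have hNT : (R * Lam v * R)ᵀ = R * Lam v * R := conj_transpose_symm (hsym v) hRT
  rw [trace_mul_self_eq hNT]
  have hLv : Lam v ≠ 0 := fun h => hv (hinj (by rw [h, map_zero]))
  have hQNQ : Q * (R * Lam v * R) * Q = Lam v := by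
    calc Q * (R * Lam v * R) * Q = (Q * R) * (Lam v * (R * Q)) := by simp only [mul_assoc]
      _ = Lam v := by rw [hQR, hRQ, one_mul, mul_one]
  have hN0 : R * Lam v * R ≠ 0 := fun h => hLv (by rw [← hQNQ, h, mul_zero, zero_mul])
  have hij : ∃ i j, (R * Lam v * R) i j ≠ 0 := by
    by_contra h
    push_neg at h
    exact hN0 (by ext i j; simpa using h i j)
  obtain ⟨i, j, hij⟩ := hij
  refine Finset.sum_pos' (fun k _ => Finset.sum_nonneg fun l _ => sq_nonneg _)
    ⟨i, Finset.mem_univ i, Finset.sum_pos' (fun l _ => sq_nonneg _)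
      ⟨j, Finset.mem_univ j, by positivity⟩⟩

end Stmt11Aux

end Aux

open Stmt11Aux in
/-- universal certificates. If `e = -g(x₁)`, `r ∈ (0,1/2]` and
`c ≥ ((1+r)/r)·‖t‖*_{x₁}`, then `c⁻¹x₁` is a dual certificate of `t + c·e`, and
the gradient certificate `y_c` of `t + c·e` satisfies `‖c⁻¹x₁ − y_c‖_{c⁻¹x₁} ≤ r`. -/
theorem stmt11 {U L : ℕ} (hU : 0 < U) (hL : 0 < L)
    (Lam : (Fin U → ℝ) →ₗ[ℝ] Matrix (Fin L) (Fin L) ℝ)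
    (hinj : Function.Injective Lam) (hsym : ∀ v, (Lam v).IsSymm)
    (x₁ : Fin U → ℝ) (hx₁ : (Lam x₁).PosDef)
    (e : Fin U → ℝ) (he : e = -grad Lam x₁)
    (r : ℝ) (hr0 : 0 < r) (hr : r ≤ 1 / 2)
    (t : Fin U → ℝ) (c : ℝ) (hc0 : 0 < c)
    (hc : ((1 + r) / r) * dualNorm Lam x₁ t ≤ c) :
    (Lam ((hess Lam (c⁻¹ • x₁))⁻¹.mulVec (t + c • e))).PosSemidef ∧
      ∀ yc : Fin U → ℝ, (Lam yc).PosDef → -grad Lam yc = t + c • e →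
        locNorm Lam (c⁻¹ • x₁) (c⁻¹ • x₁ - yc) ≤ r := by
  have hc0' : c ≠ 0 := hc0.ne'
  have h1r : (0:ℝ) < 1 + r := by linarith
  set xb : Fin U → ℝ := c⁻¹ • x₁ with hxbdef
  have hLxb : Lam xb = c⁻¹ • Lam x₁ := map_smul Lam c⁻¹ x₁
  -- A := Lam xb is positive definite
  have hA : (Lam xb).PosDef := by
    rw [hLxb]
    refine Matrix.PosDef.of_dotProduct_mulVec_pos (symm_to_herm ?_) fun z hz => ?_
    · have h := herm_symm hx₁.1
      rw [Matrix.transpose_smul, h]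
    · rw [star_trivial, smul_mulVec, dotProduct_smul, smul_eq_mul]
      refine mul_pos (inv_pos.mpr hc0) ?_
      have := hx₁.dotProduct_mulVec_pos hz
      rwa [star_trivial] at this
  have hx₁det : IsUnit (Lam x₁).det := (Matrix.isUnit_iff_isUnit_det _).mp hx₁.isUnit
  have hAdet : IsUnit (Lam xb).det := (Matrix.isUnit_iff_isUnit_det _).mp hA.isUnit
  have hAinv : (Lam xb)⁻¹ = c • (Lam x₁)⁻¹ := by
    apply Matrix.inv_eq_right_inv
    rw [hLxb, Matrix.smul_mul, Matrix.mul_smul, smul_smul, inv_mul_cancel₀ hc0', one_smul,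
      Matrix.mul_nonsing_inv _ hx₁det]
  -- Hessians are positive definite
  have hH : (hess Lam xb).PosDef := hess_posDef Lam hinj hsym xb hA
  have hH₁ : (hess Lam x₁).PosDef := hess_posDef Lam hinj hsym x₁ hx₁
  have hHdet : IsUnit (hess Lam xb).det := (Matrix.isUnit_iff_isUnit_det _).mp hH.isUnit
  have hH₁det : IsUnit (hess Lam x₁).det := (Matrix.isUnit_iff_isUnit_det _).mp hH₁.isUnit
  have hHinv1 : hess Lam xb * (hess Lam xb)⁻¹ = 1 := Matrix.mul_nonsing_inv _ hHdet
  have hHinv2 : (hess Lam xb)⁻¹ * hess Lam xb = 1 := Matrix.nonsing_inv_mul _ hHdet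
  have hHsymT : (hess Lam xb)ᵀ = hess Lam xb := hess_symm Lam xb
  -- scaling of the Hessian
  have hHs : hess Lam xb = (c^2) • hess Lam x₁ := by
    ext i j
    simp only [hess, Matrix.of_apply, Matrix.smul_apply, smul_eq_mul]
    rw [hAinv]
    simp only [Matrix.smul_mul, Matrix.mul_smul, trace_smul, smul_eq_mul]
    ring
  have hHinv : (hess Lam xb)⁻¹ = (c^2)⁻¹ • (hess Lam x₁)⁻¹ := by
    apply Matrix.inv_eq_right_inv
    rw [hHs, Matrix.smul_mul, Matrix.mul_smul, smul_smul,
      mul_inv_cancel₀ (pow_ne_zero 2 hc0'), one_smul, Matrix.mul_nonsing_inv _ hH₁det]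
  -- the dual norm at xb
  set δ := dualNorm Lam xb t with hδdef
  have hδ0 : 0 ≤ δ := Real.sqrt_nonneg _
  have hδe : δ = c⁻¹ * dualNorm Lam x₁ t := by
    rw [hδdef, dualNorm, dualNorm, hHinv, smul_mulVec, dotProduct_smul, smul_eq_mul,
      Real.sqrt_mul (by positivity), Real.sqrt_inv, Real.sqrt_sq hc0.le]
  have hδs : δ ≤ r / (1 + r) := by
    have hmul : (r/(1+r)) * ((1+r)/r) = 1 := by field_simp
    have hd1 : dualNorm Lam x₁ t ≤ (r/(1+r)) * c := by
      calc dualNorm Lam x₁ t = (r/(1+r)) * (((1+r)/r) * dualNorm Lam x₁ t) := by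
            rw [← mul_assoc, hmul, one_mul]
        _ ≤ (r/(1+r)) * c := mul_le_mul_of_nonneg_left hc (by positivity)
    rw [hδe]
    calc c⁻¹ * dualNorm Lam x₁ t ≤ c⁻¹ * ((r/(1+r)) * c) :=
          mul_le_mul_of_nonneg_left hd1 (inv_nonneg.mpr hc0.le)
      _ = r/(1+r) := by
          rw [mul_comm (r/(1+r)) c, ← mul_assoc, inv_mul_cancel₀ hc0', one_mul]
  have hrr1 : r/(1+r) ≤ 1 := by rw [div_le_one h1r]; linarith
  -- gradient identities
  have hgradxb : -grad Lam xb = c • e := by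
    funext i
    simp only [he, Pi.neg_apply, Pi.smul_apply, smul_eq_mul, grad, neg_neg]
    rw [hAinv, Matrix.smul_mul, trace_smul, smul_eq_mul]
  have hHx : hess Lam xb *ᵥ xb = c • e := by
    rw [← hgradxb]
    funext i
    have h1 : (hess Lam xb *ᵥ xb) i = Pi.single i 1 ⬝ᵥ (hess Lam xb *ᵥ xb) := by
      rw [single_dotProduct, one_mul]
    have h2 : (-grad Lam xb) i = Pi.single i 1 ⬝ᵥ (-grad Lam xb) := by
      rw [single_dotProduct, one_mul]
    rw [h1, h2, hess_bilin, dot_neg_grad,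
      mul_assoc ((Lam xb)⁻¹ * Lam (Pi.single i 1)), Matrix.nonsing_inv_mul _ hAdet, mul_one]
  set w : Fin U → ℝ := (hess Lam xb)⁻¹ *ᵥ t with hw
  have hsplit : (hess Lam xb)⁻¹ *ᵥ (t + c • e) = w + xb := by
    rw [Matrix.mulVec_add, hw]
    congr 1
    rw [← hHx, Matrix.mulVec_mulVec, hHinv2, Matrix.one_mulVec]
  have hδsq : t ⬝ᵥ (hess Lam xb)⁻¹ *ᵥ t = δ^2 := by
    rw [hδdef, dualNorm, Real.sq_sqrt]
    have := hH.inv.posSemidef.dotProduct_mulVec_nonneg t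
    rwa [star_trivial] at this
  have hwHw : w ⬝ᵥ hess Lam xb *ᵥ w = δ^2 := by
    rw [hw, Matrix.mulVec_mulVec, hHinv1, Matrix.one_mulVec, dotProduct_comm, hδsq]
  obtain ⟨Q, R, hQT, hRT, hQQ, hRR, hQR, hRQ⟩ := exists_sqrt hA
  have hQH : Qᴴ = Q := symm_to_herm hQT
  constructor
  · -- part (i)
    rw [hsplit, map_add]
    set N := R * Lam w * R with hN
    have hNT : Nᵀ = N := conj_transpose_symm (hsym w) hRT
    have htrN : (N * N).trace = δ^2 := by
      rw [hN, ← quad_eq_trace Lam xb hRR w, hwHw]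
    have hpsd1 : (1 + N).PosSemidef := by
      refine one_add_posSemidef hNT ?_
      rw [htrN]
      nlinarith [hδ0, hδs, hrr1]
    have hQNQ : Q * N * Q = Lam w := by
      rw [hN]
      calc Q * (R * Lam w * R) * Q = (Q * R) * (Lam w * (R * Q)) := by simp only [mul_assoc]
        _ = Lam w := by rw [hQR, hRQ, one_mul, mul_one]
    have key : Lam w + Lam xb = Qᴴ * (1 + N) * Q := by
      rw [hQH, mul_add, mul_one, add_mul, hQQ, hQNQ]
      exact add_comm _ _
    rw [key]
    exact hpsd1.conjTranspose_mul_mul_same Q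
  · -- part (ii)
    intro yc hy hgy
    have hydet : IsUnit (Lam yc).det := (Matrix.isUnit_iff_isUnit_det _).mp hy.isUnit
    set v : Fin U → ℝ := xb - yc with hv
    have hLv : Lam v = Lam xb - Lam yc := by rw [hv, map_sub]
    set S := R * Lam v * R with hS
    have hST : Sᵀ = S := conj_transpose_symm (hsym v) hRT
    have hq : locNorm Lam xb v = Real.sqrt ((S * S).trace) := by
      rw [locNorm, quad_eq_trace Lam xb hRR v, ← hS]
    set q := Real.sqrt ((S * S).trace) with hqdef
    have hq0 : 0 ≤ q := Real.sqrt_nonneg _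
    have htrS : (S * S).trace = q^2 :=
      (Real.sq_sqrt (trace_mul_self_nonneg hST)).symm
    have hRAR : R * Lam xb * R = 1 := by
      rw [← hQQ]
      calc R * (Q * Q) * R = (R * Q) * (Q * R) := by simp only [mul_assoc]
        _ = 1 := by rw [hRQ, hQR, one_mul]
    set M := R * Lam yc * R with hM
    have hSM : S = 1 - M := by
      rw [hS, hM, hLv, Matrix.mul_sub, Matrix.sub_mul, hRAR]
    have hMpd : M.PosDef := by
      rw [hM]
      exact conj_posDef hy hRT hRQ
    have hMdet : IsUnit M.det := (Matrix.isUnit_iff_isUnit_det _).mp hMpd.isUnit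
    have hMM : M * M⁻¹ = 1 := Matrix.mul_nonsing_inv _ hMdet
    have hMM' : M⁻¹ * M = 1 := Matrix.nonsing_inv_mul _ hMdet
    -- upper bound on quadratic form of M
    have hub : ∀ z, z ⬝ᵥ M *ᵥ z ≤ (1 + q) * (z ⬝ᵥ z) := by
      intro z
      have hM1S : M = 1 - S := by rw [hSM, sub_sub_cancel]
      rw [hM1S, Matrix.sub_mulVec, dotProduct_sub, Matrix.one_mulVec]
      have habs := (abs_le.mp (abs_quad_le hST z)).1
      have hzz := dot_self_nonneg z
      rw [← hqdef] at habs
      linarith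
    have h1q : (0:ℝ) < 1 + q := by linarith
    have htr1 : ((S * S).trace) / (1 + q) ≤ (S * M⁻¹ * S).trace :=
      trace_conj_lower hST (fun z => inv_quad_lower hMpd h1q hub z)
    -- the trace identity
    have hMinv : M⁻¹ = Q * (Lam yc)⁻¹ * Q := by
      apply Matrix.inv_eq_right_inv
      rw [hM]
      calc R * Lam yc * R * (Q * (Lam yc)⁻¹ * Q)
          = R * (Lam yc * ((R * Q) * ((Lam yc)⁻¹ * Q))) := by simp only [mul_assoc]
        _ = R * (Lam yc * ((Lam yc)⁻¹ * Q)) := by rw [hRQ, one_mul]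
        _ = R * ((Lam yc * (Lam yc)⁻¹) * Q) := by rw [mul_assoc]
        _ = R * Q := by rw [Matrix.mul_nonsing_inv _ hydet, one_mul]
        _ = 1 := hRQ
    have hexp : S * M⁻¹ * S = M⁻¹ - 1 - (1 - M) := by
      rw [hSM]
      calc (1 - M) * M⁻¹ * (1 - M) = (M⁻¹ - M * M⁻¹) * (1 - M) := by
            rw [Matrix.sub_mul, one_mul]
        _ = (M⁻¹ - 1) * (1 - M) := by rw [hMM]
        _ = (M⁻¹ * 1 - M⁻¹ * M) - (1 - M) := by
            rw [Matrix.sub_mul, Matrix.mul_sub, one_mul]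
        _ = M⁻¹ - 1 - (1 - M) := by rw [mul_one, hMM']
    have htrMinv : M⁻¹.trace = ((Lam yc)⁻¹ * Lam xb).trace := by
      rw [hMinv, trace_mul_comm (Q * (Lam yc)⁻¹) Q, ← mul_assoc, hQQ, trace_mul_comm]
    have htrM : M.trace = ((Lam xb)⁻¹ * Lam yc).trace := by
      rw [hM, trace_mul_comm (R * Lam yc) R, ← mul_assoc, hRR]
    have htrexp : (S * M⁻¹ * S).trace
        = ((Lam yc)⁻¹ * Lam xb).trace + ((Lam xb)⁻¹ * Lam yc).trace
          - 2 * (1 : Matrix (Fin L) (Fin L) ℝ).trace := by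
      rw [hexp, Matrix.trace_sub, Matrix.trace_sub, Matrix.trace_sub, htrMinv, htrM]
      ring
    have hB1 : ((Lam yc)⁻¹ * Lam v).trace
        = ((Lam yc)⁻¹ * Lam xb).trace - (1 : Matrix (Fin L) (Fin L) ℝ).trace := by
      rw [hLv, Matrix.mul_sub, Matrix.trace_sub, Matrix.nonsing_inv_mul _ hydet]
    have hA1 : ((Lam xb)⁻¹ * Lam v).trace
        = (1 : Matrix (Fin L) (Fin L) ℝ).trace - ((Lam xb)⁻¹ * Lam yc).trace := by
      rw [hLv, Matrix.mul_sub, Matrix.trace_sub, Matrix.nonsing_inv_mul _ hAdet]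
    have ht : v ⬝ᵥ t = ((Lam yc)⁻¹ * Lam v).trace - ((Lam xb)⁻¹ * Lam v).trace := by
      have h1 : v ⬝ᵥ (-grad Lam yc) = v ⬝ᵥ t + v ⬝ᵥ (c • e) := by
        rw [hgy, dotProduct_add]
      have h2 := dot_neg_grad Lam yc v
      have h3 := dot_neg_grad Lam xb v
      rw [← hgradxb] at h1
      linarith [h1, h2, h3]
    have hdot : (S * M⁻¹ * S).trace = v ⬝ᵥ t := by
      rw [htrexp, ht, hB1, hA1]
      ring
    -- Cauchy–Schwarz
    have hvHv : v ⬝ᵥ hess Lam xb *ᵥ v = q^2 := by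
      rw [quad_eq_trace Lam xb hRR v, ← hS, htrS]
    have hcs : v ⬝ᵥ t ≤ δ * q := by
      have h := psd_cauchy hH.posSemidef w v
      have h1 : w ⬝ᵥ hess Lam xb *ᵥ v = v ⬝ᵥ t := by
        rw [dot_mulVec_comm hHsymT w v, hw, Matrix.mulVec_mulVec, hHinv1,
          Matrix.one_mulVec]
      rw [h1, hwHw, hvHv] at h
      have hd : 0 ≤ δ * q := mul_nonneg hδ0 hq0
      have h3 : Real.sqrt ((v ⬝ᵥ t)^2) ≤ Real.sqrt ((δ * q)^2) :=
        Real.sqrt_le_sqrt (by rw [mul_pow]; exact h)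
      rw [Real.sqrt_sq_eq_abs, Real.sqrt_sq hd] at h3
      exact (le_abs_self _).trans h3
    -- conclude
    have hfin : q ≤ r := by
      rw [htrS, hdot] at htr1
      have hδq : δ * q ≤ (r/(1+r)) * q := mul_le_mul_of_nonneg_right hδs hq0
      have key : q^2 / (1+q) ≤ (r/(1+r)) * q := le_trans (le_trans htr1 hcs) hδq
      rw [div_le_iff₀ h1q] at key
      have key2 : q^2 * (1+r) ≤ r * q * (1+q) := by
        have h4 := mul_le_mul_of_nonneg_right key h1r.le
        have h5 : r/(1+r) * q * (1+q) * (1+r) = r * q * (1+q) := by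
          field_simp
        rw [h5] at h4
        exact h4
      have key3 : q^2 ≤ r * q := by linarith [key2]
      rcases hq0.eq_or_lt with h0 | h0
      · linarith
      · have h6 : q * q ≤ r * q := by rw [← sq]; exact key3
        exact le_of_mul_le_mul_right h6 h0
    rw [hq]
    exact hfin
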